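/- Any two connected simple graphs with the same (finite) number of vertices and the same number of edges are slide-equivalent: there is a finite sequence of edge slides transforming the first graph into a graph isomorphic to the second. -/

import Mathlib

/-- An edge slide: given distinct vertices `x, y, z` with `x ~ y`, `y ~ z` and `x ≁ z`,
slide the edge `xy` to `xz`. -/
def EdgeSlide {V : Type*} (G G' : SimpleGraph V) : Prop :=
  ∃ x y z : V, x ≠ z ∧ G.Adj x y ∧ G.Adj y z ∧ ¬ G.Adj x z ∧
    G' = G.deleteEdges {s(x, y)} ⊔ SimpleGraph.fromEdgeSet {s(x, z)}

namespace SlideAux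

open SimpleGraph

variable {V : Type*}

/-- The result of sliding edge `xy` to `xz`. -/
def slideG (G : SimpleGraph V) (x y z : V) : SimpleGraph V :=
  G.deleteEdges {s(x, y)} ⊔ SimpleGraph.fromEdgeSet {s(x, z)}

lemma slideG_adj {G : SimpleGraph V} {x y z a b : V} :
    (slideG G x y z).Adj a b ↔
      (G.Adj a b ∧ ¬((a = x ∧ b = y) ∨ (a = y ∧ b = x))) ∨
      (((a = x ∧ b = z) ∨ (a = z ∧ b = x)) ∧ a ≠ b) := by
  simp [slideG, SimpleGraph.deleteEdges_adj, SimpleGraph.fromEdgeSet_adj, Sym2.eq_iff]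

lemma edgeSlide_of_slideG {G : SimpleGraph V} {x y z : V} (hxz : x ≠ z)
    (hxy : G.Adj x y) (hyz : G.Adj y z) (hnxz : ¬ G.Adj x z) :
    EdgeSlide G (slideG G x y z) := ⟨x, y, z, hxz, hxy, hyz, hnxz, rfl⟩

lemma slideG_adj_xz {G : SimpleGraph V} {x y z : V} (hxz : x ≠ z) :
    (slideG G x y z).Adj x z := slideG_adj.mpr (Or.inr ⟨Or.inl ⟨rfl, rfl⟩, hxz⟩)

lemma slideG_adj_zy {G : SimpleGraph V} {x y z : V} (hxz : x ≠ z) (hyz : G.Adj y z) :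
    (slideG G x y z).Adj z y := by
  refine slideG_adj.mpr (Or.inl ⟨hyz.symm, ?_⟩)
  rintro (⟨h1, -⟩ | ⟨h1, -⟩)
  · exact hxz h1.symm
  · exact hyz.ne h1.symm

lemma slideG_not_adj_xy {G : SimpleGraph V} {x y z : V}
    (hxy : x ≠ y) (hyz : y ≠ z) (hxz : x ≠ z) :
    ¬ (slideG G x y z).Adj x y := by
  intro hc
  rcases slideG_adj.mp hc with ⟨-, h1⟩ | ⟨h1, -⟩
  · exact h1 (Or.inl ⟨rfl, rfl⟩)
  · rcases h1 with ⟨-, h2⟩ | ⟨h2, -⟩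
    · exact hyz h2
    · exact hxz h2

/-- Edges of `slideG`. -/
lemma slideG_edgeSet {G : SimpleGraph V} {x y z : V} (hxz : x ≠ z) :
    (slideG G x y z).edgeSet = (G.edgeSet \ {s(x, y)}) ∪ {s(x, z)} := by
  rw [slideG, edgeSet_sup, edgeSet_deleteEdges, edgeSet_fromEdgeSet]
  congr 1
  ext e
  simp only [Set.mem_diff, Set.mem_singleton_iff, Set.mem_setOf_eq]
  constructor
  · rintro ⟨rfl, -⟩; rfl
  · rintro rfl; exact ⟨rfl, by simp [Sym2.isDiag_iff_proj_eq, hxz]⟩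

lemma slideG_symm_eq {G : SimpleGraph V} {x y z : V} (hxz : x ≠ z)
    (hxy : G.Adj x y) (hyz : G.Adj y z) (hnxz : ¬ G.Adj x z) :
    G = slideG (slideG G x y z) x z y := by
  have hxy' : x ≠ y := hxy.ne
  have hp : s(x, y) ∈ G.edgeSet := hxy
  have hq : s(x, z) ∉ G.edgeSet := hnxz
  rw [← SimpleGraph.edgeSet_inj, slideG_edgeSet hxy', slideG_edgeSet hxz]
  ext e
  simp only [Set.union_singleton, Set.mem_insert_iff, Set.mem_diff, Set.mem_singleton_iff]
  constructor
  · intro he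
    by_cases hep : e = s(x, y)
    · exact Or.inl hep
    · refine Or.inr ⟨Or.inr ⟨he, hep⟩, ?_⟩
      rintro rfl; exact hq he
  · rintro (rfl | ⟨h1, hne⟩)
    · exact hp
    · rcases h1 with rfl | ⟨he, -⟩
      · exact absurd rfl hne
      · exact he

lemma edgeSlide_symm {G G' : SimpleGraph V} (h : EdgeSlide G G') : EdgeSlide G' G := by
  obtain ⟨x, y, z, hxz, hxy, hyz, hnxz, rfl⟩ := h
  exact ⟨x, z, y, hxy.ne, slideG_adj_xz hxz, slideG_adj_zy hxz hyz,
    slideG_not_adj_xy hxy.ne hyz.ne hxz, slideG_symm_eq hxz hxy hyz hnxz⟩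

lemma edgeSlide_ncard {G G' : SimpleGraph V} [Finite V] (h : EdgeSlide G G') :
    Nat.card G'.edgeSet = Nat.card G.edgeSet := by
  obtain ⟨x, y, z, hxz, hxy, hyz, hnxz, rfl⟩ := h
  have hG' : G.deleteEdges {s(x, y)} ⊔ SimpleGraph.fromEdgeSet {s(x, z)} = slideG G x y z := rfl
  rw [hG']
  have hfin : G.edgeSet.Finite := Set.toFinite _
  have hmem : s(x, y) ∈ G.edgeSet := hxy
  have hnmem : s(x, z) ∉ G.edgeSet \ {s(x, y)} := fun hc => hnxz hc.1
  rw [show (Nat.card ((slideG G x y z).edgeSet)) = (slideG G x y z).edgeSet.ncard from rfl,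
    show (Nat.card (G.edgeSet)) = G.edgeSet.ncard from rfl, slideG_edgeSet hxz]
  rw [Set.union_singleton, Set.ncard_insert_of_notMem hnmem hfin.diff,
    Set.ncard_diff_singleton_of_mem hmem]
  have : 1 ≤ G.edgeSet.ncard := by
    rw [Nat.one_le_iff_ne_zero]
    intro h0
    rw [Set.ncard_eq_zero hfin] at h0
    simp [h0] at hmem
  omega

lemma edgeSlide_connected {G G' : SimpleGraph V} (h : EdgeSlide G G') (hc : G.Connected) :
    G'.Connected := by
  obtain ⟨x, y, z, hxz, hxy, hyz, hnxz, rfl⟩ := h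
  have hG' : G.deleteEdges {s(x, y)} ⊔ SimpleGraph.fromEdgeSet {s(x, z)} = slideG G x y z := rfl
  rw [hG']
  have key : ∀ a b : V, G.Adj a b → (slideG G x y z).Reachable a b := by
    intro a b hab
    by_cases h : (a = x ∧ b = y) ∨ (a = y ∧ b = x)
    · have hxy' : (slideG G x y z).Reachable x y :=
        ((slideG_adj_xz hxz).toWalk.append (slideG_adj_zy hxz hyz).toWalk).reachable
      rcases h with ⟨rfl, rfl⟩ | ⟨rfl, rfl⟩
      · exact hxy'
      · exact hxy'.symm
    · exact (slideG_adj.mpr (Or.inl ⟨hab, h⟩)).reachable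
  rw [connected_iff] at hc ⊢
  refine ⟨fun a b => ?_, hc.2⟩
  have := hc.1 a b
  rw [reachable_iff_reflTransGen] at this
  induction this with
  | refl => rfl
  | tail _ hadj ih => exact ih.trans (key _ _ hadj)

section Dominating

variable [Fintype V]

lemma crossing_aux {G : SimpleGraph V} (v₀ : V) :
    ∀ {a u : V}, G.Walk a u → (a = v₀ ∨ G.Adj v₀ a) → (u ≠ v₀ ∧ ¬ G.Adj v₀ u) →
      ∃ w u', G.Adj v₀ w ∧ G.Adj w u' ∧ u' ≠ v₀ ∧ ¬ G.Adj v₀ u' := by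
  intro a u p
  induction p with
  | nil =>
    rintro ha ⟨h1, h2⟩
    rcases ha with rfl | h
    · exact absurd rfl h1
    · exact absurd h h2
  | @cons a b c hadj p ih =>
    intro ha hu
    by_cases hb : b = v₀ ∨ G.Adj v₀ b
    · exact ih hb hu
    · push_neg at hb
      rcases ha with rfl | hva
      · exact absurd hadj hb.2
      · exact ⟨a, b, hva, hadj, hb.1, hb.2⟩

/-- Any connected graph slides to one in which `v₀` is adjacent to every other vertex. -/
lemma to_dominating (v₀ : V) :
    ∀ (n : ℕ) (G : SimpleGraph V), {u | u ≠ v₀ ∧ ¬ G.Adj v₀ u}.ncard ≤ n → G.Connected →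
      ∃ G', Relation.ReflTransGen EdgeSlide G G' ∧ G'.Connected ∧
        ∀ u, u ≠ v₀ → G'.Adj v₀ u := by
  intro n
  induction n with
  | zero =>
    intro G hcard hconn
    refine ⟨G, Relation.ReflTransGen.refl, hconn, fun u hu => ?_⟩
    by_contra hadj
    have : u ∈ {u | u ≠ v₀ ∧ ¬ G.Adj v₀ u} := ⟨hu, hadj⟩
    rw [Nat.le_zero, Set.ncard_eq_zero (Set.toFinite _)] at hcard
    simp [hcard] at this
  | succ n ih =>
    intro G hcard hconn
    by_cases hempty : {u | u ≠ v₀ ∧ ¬ G.Adj v₀ u} = ∅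
    · refine ⟨G, Relation.ReflTransGen.refl, hconn, fun u hu => ?_⟩
      by_contra hadj
      have : u ∈ {u | u ≠ v₀ ∧ ¬ G.Adj v₀ u} := ⟨hu, hadj⟩
      simp [hempty] at this
    · obtain ⟨u, hu⟩ := Set.nonempty_iff_ne_empty.mpr hempty
      obtain ⟨p⟩ := hconn.preconnected v₀ u
      obtain ⟨w, u', hvw, hwu, hu'v, hnu'⟩ :=
        crossing_aux v₀ p (Or.inl rfl) ⟨hu.1, hu.2⟩
      have hwv₀ : w ≠ v₀ := hvw.ne'
      -- slide edge u'w to u'v₀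
      set G₁ := slideG G u' w v₀ with hG₁
      have hslide : EdgeSlide G G₁ :=
        edgeSlide_of_slideG hu'v hwu.symm hvw.symm (fun h => hnu' h.symm)
      have hconn₁ : G₁.Connected := edgeSlide_connected hslide hconn
      have hNN : {v | v ≠ v₀ ∧ ¬ G₁.Adj v₀ v} = {v | v ≠ v₀ ∧ ¬ G.Adj v₀ v} \ {u'} := by
        ext v
        simp only [Set.mem_setOf_eq, Set.mem_diff, Set.mem_singleton_iff, hG₁, slideG_adj]
        constructor
        · rintro ⟨hv, hadj⟩
          refine ⟨⟨hv, fun h => hadj ?_⟩, ?_⟩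
          · refine Or.inl ⟨h, ?_⟩
            rintro (⟨h1, -⟩ | ⟨h1, -⟩)
            · exact hu'v h1.symm
            · exact hwv₀ h1.symm
          · rintro rfl
            exact hadj (Or.inr ⟨Or.inr (by simp), fun h => hv h.symm⟩)
        · rintro ⟨⟨hv, hadj⟩, hvu'⟩
          refine ⟨hv, ?_⟩
          rintro (⟨h1, -⟩ | ⟨h1, -⟩)
          · exact hadj h1
          · rcases h1 with ⟨h2, -⟩ | ⟨-, h3⟩
            · exact hu'v h2.symm
            · exact hvu' h3
        done
      have hmem : u' ∈ {v | v ≠ v₀ ∧ ¬ G.Adj v₀ v} := ⟨hu'v, hnu'⟩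
      have hcard₁ : {v | v ≠ v₀ ∧ ¬ G₁.Adj v₀ v}.ncard ≤ n := by
        rw [hNN, Set.ncard_diff_singleton_of_mem hmem]
        have h1 : 0 < {v | v ≠ v₀ ∧ ¬ G.Adj v₀ v}.ncard :=
          (Set.ncard_pos (Set.toFinite _)).mpr ⟨u', hmem⟩
        omega
      obtain ⟨G', hR, hconn', hdom⟩ := ih G₁ hcard₁ hconn₁
      exact ⟨G', Relation.ReflTransGen.head hslide hR, hconn', hdom⟩

end Dominating

section Reconfig

variable [Fintype V]

/-- Two slides via the dominating vertex `v₀` move an edge `xw` to `xz`. -/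
lemma move_edge {v₀ x w z : V} {G : SimpleGraph V}
    (hdom : ∀ u, u ≠ v₀ → G.Adj v₀ u)
    (hx : x ≠ v₀) (hw : w ≠ v₀) (hz : z ≠ v₀) (hzx : z ≠ x)
    (hxw : G.Adj x w) (hnxz : ¬ G.Adj x z) :
    ∃ G₂ : SimpleGraph V, Relation.ReflTransGen EdgeSlide G G₂ ∧
      G₂.edgeSet = (G.edgeSet \ {s(x, w)}) ∪ {s(x, z)} ∧
      (∀ u, u ≠ v₀ → G₂.Adj v₀ u) := by
  have hxv : G.Adj x v₀ := (hdom x hx).symm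
  have hvz : G.Adj v₀ z := hdom z hz
  have hwx : w ≠ x := hxw.ne'
  -- first slide: x v₀ → x z
  set G₁ := slideG G x v₀ z with hG₁def
  have hs₁ : EdgeSlide G G₁ := edgeSlide_of_slideG hzx.symm hxv hvz hnxz
  -- second slide: x w → x v₀
  have h₁xw : G₁.Adj x w := by
    refine slideG_adj.mpr (Or.inl ⟨hxw, ?_⟩)
    rintro (⟨-, h1⟩ | ⟨h1, -⟩)
    · exact hw h1
    · exact hx h1
  have h₁wv : G₁.Adj w v₀ := by
    refine slideG_adj.mpr (Or.inl ⟨(hdom w hw).symm, ?_⟩)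
    rintro (⟨h1, -⟩ | ⟨h1, -⟩)
    · exact hwx h1
    · exact hw h1
  have h₁nxv : ¬ G₁.Adj x v₀ := by
    intro hc
    rcases slideG_adj.mp hc with ⟨-, h1⟩ | ⟨h1, -⟩
    · exact h1 (Or.inl ⟨rfl, rfl⟩)
    · rcases h1 with ⟨-, h2⟩ | ⟨h2, -⟩
      · exact hz h2.symm
      · exact hzx h2.symm
  set G₂ := slideG G₁ x w v₀ with hG₂def
  have hs₂ : EdgeSlide G₁ G₂ := edgeSlide_of_slideG hx h₁xw h₁wv h₁nxv
  refine ⟨G₂, Relation.ReflTransGen.head hs₁ (Relation.ReflTransGen.single hs₂), ?_, ?_⟩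
  · -- edge set computation
    have hE₁ : G₁.edgeSet = (G.edgeSet \ {s(x, v₀)}) ∪ {s(x, z)} := slideG_edgeSet hzx.symm
    have hE₂ : G₂.edgeSet = (G₁.edgeSet \ {s(x, w)}) ∪ {s(x, v₀)} := slideG_edgeSet hx
    rw [hE₂, hE₁]
    have d1 : s(x, w) ≠ s(x, v₀) := by
      rw [Ne, Sym2.eq_iff]; rintro (⟨-, h⟩ | ⟨h, -⟩); exacts [hw h, hx h]
    have d2 : s(x, w) ≠ s(x, z) := by
      rw [Ne, Sym2.eq_iff]
      rintro (⟨-, h⟩ | ⟨h, -⟩)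
      · exact hnxz (h ▸ hxw)
      · exact hzx h.symm
    have d3 : s(x, z) ≠ s(x, v₀) := by
      rw [Ne, Sym2.eq_iff]; rintro (⟨-, h⟩ | ⟨h, -⟩); exacts [hz h, hx h]
    have m1 : s(x, v₀) ∈ G.edgeSet := hxv
    have m2 : s(x, z) ∉ G.edgeSet := hnxz
    have m3 : s(x, w) ∈ G.edgeSet := hxw
    ext e
    simp only [Set.mem_union, Set.mem_diff, Set.mem_singleton_iff]
    by_cases h1 : e = s(x, w) <;> by_cases h2 : e = s(x, v₀) <;>
      by_cases h3 : e = s(x, z) <;> simp_all <;> tauto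
  · intro u hu
    rw [← SimpleGraph.mem_edgeSet, hG₂def,
      show (slideG G₁ x w v₀).edgeSet = _ from slideG_edgeSet hx,
      hG₁def, show (slideG G x v₀ z).edgeSet = _ from slideG_edgeSet hzx.symm]
    simp only [Set.mem_union, Set.mem_diff, Set.mem_singleton_iff, Sym2.eq_iff]
    by_cases hux : u = x
    · subst hux
      exact Or.inr (by simp)
    · refine Or.inl ⟨Or.inl ⟨(hdom u hu : s(v₀, u) ∈ G.edgeSet), ?_⟩, ?_⟩
      · rintro (⟨h, -⟩ | ⟨-, h⟩); exacts [hx h.symm, hux h]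
      · rintro (⟨h, -⟩ | ⟨h, -⟩); exacts [hx h.symm, hw h.symm]
end Reconfig

lemma set_aux1 {α : Type*} {X : Set α} {q r : α} (h : q ∉ X) :
    ((X ∪ {q}) \ {q}) ∪ {r} = X ∪ {r} := by
  ext u
  simp only [Set.mem_union, Set.mem_diff, Set.mem_singleton_iff]
  constructor
  · rintro (⟨(hu | rfl), hq⟩ | rfl)
    · exact Or.inl hu
    · exact absurd rfl hq
    · exact Or.inr rfl
  · rintro (hu | rfl)
    · refine Or.inl ⟨Or.inl hu, ?_⟩
      rintro rfl; exact h hu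
    · exact Or.inr rfl

lemma set_aux2 {α : Type*} {E : Set α} {p q r : α}
    (hqE : q ∈ E) (hrE : r ∉ E) (hqp : q ≠ p) (hrp : r ≠ p) :
    (((E \ {q}) ∪ {r}) \ {p}) ∪ {q} = (E \ {p}) ∪ {r} := by
  ext u
  simp only [Set.mem_union, Set.mem_diff, Set.mem_singleton_iff]
  constructor
  · rintro (⟨(⟨hu, hq⟩ | rfl), hp⟩ | rfl)
    · exact Or.inl ⟨hu, hp⟩
    · exact Or.inr rfl
    · exact Or.inl ⟨hqE, hqp⟩
  · rintro (⟨hu, hp⟩ | rfl)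
    · by_cases huq : u = q
      · exact Or.inr huq
      · exact Or.inl ⟨Or.inl ⟨hu, huq⟩, hp⟩
    · exact Or.inl ⟨Or.inr rfl, hrp⟩

section Reconfig2

variable [Fintype V]

/-- With a dominating vertex `v₀`, any edge `xw` (not at `v₀`) can be relocated to an
arbitrary non-edge position `ab` (not at `v₀`). -/
lemma reloc {v₀ x w a b : V} {G : SimpleGraph V}
    (hdom : ∀ u, u ≠ v₀ → G.Adj v₀ u)
    (hx : x ≠ v₀) (hw : w ≠ v₀) (ha : a ≠ v₀) (hb : b ≠ v₀) (hab : a ≠ b)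
    (hxw : G.Adj x w) (hnab : ¬ G.Adj a b) :
    ∃ G₂ : SimpleGraph V, Relation.ReflTransGen EdgeSlide G G₂ ∧
      G₂.edgeSet = (G.edgeSet \ {s(x, w)}) ∪ {s(a, b)} ∧
      (∀ u, u ≠ v₀ → G₂.Adj v₀ u) := by
  by_cases hax : a = x
  · obtain ⟨G₂, hR, hE, hdom₂⟩ :=
      move_edge hdom hx hw hb (by rw [← hax]; exact Ne.symm hab)
        hxw (fun h => hnab (by rw [hax]; exact h))
    have he : s(x, b) = s(a, b) := by rw [hax]
    rw [he] at hE
    exact ⟨G₂, hR, hE, hdom₂⟩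
  · by_cases hbx : b = x
    · obtain ⟨G₂, hR, hE, hdom₂⟩ :=
        move_edge hdom hx hw ha (fun h => hax h)
          hxw (fun h => hnab (by rw [hbx]; exact h.symm))
      have he : s(x, a) = s(a, b) := by rw [hbx]; exact Sym2.eq_swap
      rw [he] at hE
      exact ⟨G₂, hR, hE, hdom₂⟩
    · by_cases haw : a = w
      · obtain ⟨G₂, hR, hE, hdom₂⟩ :=
          move_edge hdom hw hx hb (by rw [← haw]; exact Ne.symm hab)
            hxw.symm (fun h => hnab (by rw [haw]; exact h))
        have he1 : s(w, x) = s(x, w) := Sym2.eq_swap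
        have he2 : s(w, b) = s(a, b) := by rw [haw]
        rw [he1, he2] at hE
        exact ⟨G₂, hR, hE, hdom₂⟩
      · by_cases hbw : b = w
        · obtain ⟨G₂, hR, hE, hdom₂⟩ :=
            move_edge hdom hw hx ha (by rw [← hbw]; exact hab)
              hxw.symm (fun h => hnab (by rw [hbw]; exact h.symm))
          have he1 : s(w, x) = s(x, w) := Sym2.eq_swap
          have he2 : s(w, a) = s(a, b) := by rw [hbw]; exact Sym2.eq_swap
          rw [he1, he2] at hE
          exact ⟨G₂, hR, hE, hdom₂⟩
        · -- disjoint endpoints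
          by_cases hnxa : ¬ G.Adj x a
          · obtain ⟨G', hR', hE', hdom'⟩ := move_edge hdom hx hw ha hax hxw hnxa
            have hax' : G'.Adj a x := by
              rw [← SimpleGraph.mem_edgeSet, hE',
                show s(a, x) = s(x, a) from Sym2.eq_swap]
              exact Or.inr rfl
            have hnab' : ¬ G'.Adj a b := by
              intro hc
              have hc' : s(a, b) ∈ G'.edgeSet := hc
              rw [hE'] at hc'
              rcases hc' with ⟨hc1, -⟩ | hc1
              · exact hnab hc1
              · rw [Set.mem_singleton_iff, Sym2.eq_iff] at hc1
                rcases hc1 with ⟨h1, h2⟩ | ⟨h1, h2⟩ <;> simp_all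
            obtain ⟨G₂, hR₂, hE₂, hdom₂⟩ :=
              move_edge hdom' ha hx hb (Ne.symm hab) hax' hnab'
            refine ⟨G₂, hR'.trans hR₂, ?_, hdom₂⟩
            rw [hE₂, hE', show s(a, x) = s(x, a) from Sym2.eq_swap,
              set_aux1 (fun hc => hnxa hc.1)]
          · push_neg at hnxa
            by_cases hnxb : ¬ G.Adj x b
            · obtain ⟨G', hR', hE', hdom'⟩ := move_edge hdom hx hw hb hbx hxw hnxb
              have hbx' : G'.Adj b x := by
                rw [← SimpleGraph.mem_edgeSet, hE',
                  show s(b, x) = s(x, b) from Sym2.eq_swap]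
                exact Or.inr rfl
              have hnba' : ¬ G'.Adj b a := by
                intro hc
                have hc' : s(b, a) ∈ G'.edgeSet := hc
                rw [hE'] at hc'
                rcases hc' with ⟨hc1, -⟩ | hc1
                · exact hnab hc1.symm
                · rw [Set.mem_singleton_iff, Sym2.eq_iff] at hc1
                  rcases hc1 with ⟨h1, h2⟩ | ⟨h1, h2⟩ <;> simp_all
              obtain ⟨G₂, hR₂, hE₂, hdom₂⟩ :=
                move_edge hdom' hb hx ha hab hbx' hnba'
              refine ⟨G₂, hR'.trans hR₂, ?_, hdom₂⟩
              rw [hE₂, hE', show s(b, x) = s(x, b) from Sym2.eq_swap,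
                show s(b, a) = s(a, b) from Sym2.eq_swap,
                set_aux1 (fun hc => hnxb hc.1)]
            · push_neg at hnxb
              obtain ⟨G', hR', hE', hdom'⟩ :=
                move_edge hdom ha hx hb (Ne.symm hab) hnxa.symm hnab
              have hxw' : G'.Adj x w := by
                rw [← SimpleGraph.mem_edgeSet, hE']
                refine Or.inl ⟨hxw, ?_⟩
                rw [Set.mem_singleton_iff, Sym2.eq_iff]
                rintro (⟨h1, h2⟩ | ⟨h1, h2⟩) <;> simp_all
              have hnxa' : ¬ G'.Adj x a := by
                intro hc
                have hc' : s(x, a) ∈ G'.edgeSet := hc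
                rw [hE'] at hc'
                rcases hc' with ⟨-, hc1⟩ | hc1
                · exact hc1 (show s(x, a) ∈ {s(a, x)} by
                    rw [Set.mem_singleton_iff]; exact Sym2.eq_swap)
                · rw [Set.mem_singleton_iff, Sym2.eq_iff] at hc1
                  rcases hc1 with ⟨h1, h2⟩ | ⟨h1, h2⟩ <;> simp_all
              obtain ⟨G₂, hR₂, hE₂, hdom₂⟩ :=
                move_edge hdom' hx hw ha hax hxw' hnxa'
              refine ⟨G₂, hR'.trans hR₂, ?_, hdom₂⟩
              rw [hE₂, hE', show s(x, a) = s(a, x) from Sym2.eq_swap]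
              refine set_aux2 (hnxa.symm : s(a, x) ∈ G.edgeSet) hnab ?_ ?_
              · rw [Ne, Sym2.eq_iff]
                rintro (⟨h1, h2⟩ | ⟨h1, h2⟩) <;> simp_all
              · rw [Ne, Sym2.eq_iff]
                rintro (⟨h1, h2⟩ | ⟨h1, h2⟩) <;> simp_all

end Reconfig2

section Final

variable [Fintype V]

lemma rtg_ncard {G G' : SimpleGraph V} (h : Relation.ReflTransGen EdgeSlide G G') :
    G'.edgeSet.ncard = G.edgeSet.ncard := by
  induction h with
  | refl => rfl
  | tail _ hs ih =>
    rw [← Nat.card_coe_set_eq, edgeSlide_ncard hs, Nat.card_coe_set_eq, ih]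

/-- Two graphs with the same dominating vertex `v₀` and the same number of edges are
slide equivalent. -/
lemma dom_to_dom (v₀ : V) : ∀ (n : ℕ) (G H : SimpleGraph V),
    (∀ u, u ≠ v₀ → G.Adj v₀ u) → (∀ u, u ≠ v₀ → H.Adj v₀ u) →
    (G.edgeSet \ H.edgeSet).ncard ≤ n → G.edgeSet.ncard = H.edgeSet.ncard →
    Relation.ReflTransGen EdgeSlide G H := by
  have base : ∀ (G H : SimpleGraph V), G.edgeSet \ H.edgeSet = ∅ →
      G.edgeSet.ncard = H.edgeSet.ncard → Relation.ReflTransGen EdgeSlide G H := by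
    intro G H hdiff hcard
    have hsub : G.edgeSet ⊆ H.edgeSet := Set.diff_eq_empty.mp hdiff
    have : G.edgeSet = H.edgeSet :=
      Set.eq_of_subset_of_ncard_le hsub hcard.ge (Set.toFinite _)
    rw [SimpleGraph.edgeSet_inj] at this
    rw [this]
  intro n
  induction n with
  | zero =>
    intro G H hdG hdH hle hcard
    rw [Nat.le_zero, Set.ncard_eq_zero (Set.toFinite _)] at hle
    exact base G H hle hcard
  | succ n ih =>
    intro G H hdG hdH hle hcard
    by_cases hdiff : G.edgeSet \ H.edgeSet = ∅
    · exact base G H hdiff hcard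
    · obtain ⟨e, he⟩ := Set.nonempty_iff_ne_empty.mpr hdiff
      obtain ⟨x, w, he⟩ : ∃ x w, s(x, w) ∈ G.edgeSet \ H.edgeSet := by
        induction e using Sym2.ind with
        | _ x w => exact ⟨x, w, he⟩
      have hfne : (H.edgeSet \ G.edgeSet).Nonempty := by
        rw [Set.nonempty_iff_ne_empty]
        intro hc
        have hsub : H.edgeSet ⊆ G.edgeSet := Set.diff_eq_empty.mp hc
        have hss : H.edgeSet ⊂ G.edgeSet := by
          refine ⟨hsub, fun hsub' => ?_⟩
          exact he.2 (hsub' he.1)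
        have := Set.ncard_lt_ncard hss (Set.toFinite _)
        omega
      obtain ⟨f, hf⟩ := hfne
      obtain ⟨a, b, hf⟩ : ∃ a b, s(a, b) ∈ H.edgeSet \ G.edgeSet := by
        induction f using Sym2.ind with
        | _ a b => exact ⟨a, b, hf⟩
      have hGxw : G.Adj x w := he.1
      have hHab : H.Adj a b := hf.1
      have hx : x ≠ v₀ := by
        rintro rfl
        exact he.2 (H.mem_edgeSet.mpr (hdH w hGxw.ne'))
      have hw : w ≠ v₀ := by
        rintro rfl
        exact he.2 (H.mem_edgeSet.mpr (hdH x hx).symm)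
      have ha : a ≠ v₀ := by
        rintro rfl
        exact hf.2 (G.mem_edgeSet.mpr (hdG b hHab.ne'))
      have hb : b ≠ v₀ := by
        rintro rfl
        exact hf.2 (G.mem_edgeSet.mpr (hdG a ha).symm)
      obtain ⟨G₂, hR, hE₂, hdom₂⟩ :=
        reloc hdG hx hw ha hb hHab.ne hGxw (fun hc => hf.2 (G.mem_edgeSet.mpr hc))
      have hdiff₂ : G₂.edgeSet \ H.edgeSet = (G.edgeSet \ H.edgeSet) \ {s(x, w)} := by
        rw [hE₂]
        ext u
        simp only [Set.mem_union, Set.mem_diff, Set.mem_singleton_iff]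
        constructor
        · rintro ⟨(⟨hu, hne⟩ | rfl), hH⟩
          · exact ⟨⟨hu, hH⟩, hne⟩
          · exact absurd hf.1 hH
        · rintro ⟨⟨hu, hH⟩, hne⟩
          exact ⟨Or.inl ⟨hu, hne⟩, hH⟩
      have hcard₂ : G₂.edgeSet.ncard = G.edgeSet.ncard := by
        rw [← Nat.card_coe_set_eq, ← Nat.card_coe_set_eq]
        have := rtg_ncard hR
        rw [← Nat.card_coe_set_eq, ← Nat.card_coe_set_eq] at this
        exact this
      have hle₂ : (G₂.edgeSet \ H.edgeSet).ncard ≤ n := by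
        rw [hdiff₂, Set.ncard_diff_singleton_of_mem he]
        have hpos : 0 < (G.edgeSet \ H.edgeSet).ncard :=
          (Set.ncard_pos (Set.toFinite _)).mpr ⟨s(x, w), he⟩
        omega
      exact hR.trans (ih G₂ H hdom₂ hdH hle₂ (hcard₂.trans hcard))

end Final

end SlideAux

theorem slide_equivalent_of_same_card {V W : Type*} [Fintype V] [Fintype W]
    (G : SimpleGraph V) (S : SimpleGraph W)
    (hG : G.Connected) (hS : S.Connected)
    (hV : Fintype.card V = Fintype.card W)
    (hE : Nat.card G.edgeSet = Nat.card S.edgeSet) :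
    ∃ G' : SimpleGraph V, Relation.ReflTransGen EdgeSlide G G' ∧ Nonempty (G' ≃g S) := by
  classical
  obtain ⟨v₀⟩ : Nonempty V := hG.nonempty
  set f : W ≃ V := Fintype.equivOfCardEq hV.symm with hf
  set S₀ : SimpleGraph V := S.map f.toEmbedding with hS₀
  have iso : S ≃g S₀ := SimpleGraph.Iso.map f S
  have hS₀conn : S₀.Connected := iso.connected_iff.mp hS
  have hS₀card : Nat.card S₀.edgeSet = Nat.card S.edgeSet :=
    (Nat.card_congr iso.mapEdgeSet).symm
  obtain ⟨G₁, hRG, hG₁conn, hG₁dom⟩ :=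
    SlideAux.to_dominating v₀ {u | u ≠ v₀ ∧ ¬ G.Adj v₀ u}.ncard G le_rfl hG
  obtain ⟨S₁, hRS, hS₁conn, hS₁dom⟩ :=
    SlideAux.to_dominating v₀ {u | u ≠ v₀ ∧ ¬ S₀.Adj v₀ u}.ncard S₀ le_rfl hS₀conn
  have hcard : G₁.edgeSet.ncard = S₁.edgeSet.ncard := by
    rw [SlideAux.rtg_ncard hRG, SlideAux.rtg_ncard hRS,
      ← Nat.card_coe_set_eq, ← Nat.card_coe_set_eq, hE, hS₀card]
  have hmid : Relation.ReflTransGen EdgeSlide G₁ S₁ :=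
    SlideAux.dom_to_dom v₀ (G₁.edgeSet \ S₁.edgeSet).ncard G₁ S₁
      hG₁dom hS₁dom le_rfl hcard
  have hsym : Relation.ReflTransGen EdgeSlide S₁ S₀ :=
    (@Relation.ReflTransGen.stdSymm _ _ ⟨fun _ _ h => SlideAux.edgeSlide_symm h⟩).symm _ _ hRS
  exact ⟨S₀, (hRG.trans hmid).trans hsym, ⟨iso.symm⟩⟩
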